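/- For every real number a ≥ 0, both E_{≥a} = {f ∈ C(𝕀) : h_top(f) ≥ a} and E_{>a} = {f ∈ C(𝕀) : h_top(f) > a} are homotopy dense in C(𝕀). -/

import Mathlib

open unitInterval

/-- The topological entropy of a continuous self-map of the unit interval. -/
noncomputable def htop (f : C(I, I)) : EReal :=
  Dynamics.coverEntropy ⇑f Set.univ

/-- A subset `A` of a topological space `X` is homotopy dense if there is a homotopy
`H : X × [0,1] → X` with `H(·,0) = id` and `H(x,t) ∈ A` for all `t > 0`. -/
def HomotopyDense {X : Type*} [TopologicalSpace X] (A : Set X) : Prop :=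
  ∃ H : X × I → X, Continuous H ∧ (∀ x : X, H (x, 0) = x) ∧
    ∀ (x : X) (t : I), 0 < t → H (x, t) ∈ A

open unitInterval Set Filter MeasureTheory intervalIntegral

noncomputable section

namespace EntropyHD

/-- clamp a real number into `I`. -/
def pr : ℝ → I := fun x => Set.projIcc (0:ℝ) 1 zero_le_one x

lemma continuous_pr : Continuous pr := continuous_projIcc (h := zero_le_one)

lemma pr_of_mem {x : ℝ} (hx : x ∈ Icc (0:ℝ) 1) : (pr x : ℝ) = x := by
  rw [pr, Set.projIcc_of_mem _ hx]

/-- integrand of the mollification -/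
def itg (f : C(I,I)) (t x v : ℝ) : ℝ := (1 - t/2) * (f (pr (x + (t/100)*v)) : ℝ) + t/4

lemma itg_cont : Continuous (fun z : ((C(I,I) × ℝ) × ℝ) × ℝ =>
    itg z.1.1.1 z.1.1.2 z.1.2 z.2) := by
  unfold itg
  have harg : Continuous fun z : ((C(I,I) × ℝ) × ℝ) × ℝ =>
      pr (z.1.2 + (z.1.1.2/100)*z.2) := by
    apply continuous_pr.comp
    fun_prop
  have h1 : Continuous fun z : ((C(I,I) × ℝ) × ℝ) × ℝ =>
      (z.1.1.1 (pr (z.1.2 + (z.1.1.2/100)*z.2)) : ℝ) := by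
    apply continuous_subtype_val.comp
    exact ContinuousEval.continuous_eval.comp ((continuous_fst.comp (continuous_fst.comp continuous_fst)).prodMk harg)
  fun_prop

/-- the mollified, squeezed map -/
def A (f : C(I,I)) (t x : ℝ) : ℝ := ∫ v in (0:ℝ)..1, itg f t x v

lemma A_cont : Continuous (fun z : (C(I,I) × ℝ) × ℝ => A z.1.1 z.1.2 z.2) := by
  apply intervalIntegral.continuous_parametric_intervalIntegral_of_continuous'
  exact itg_cont

end EntropyHD

namespace EntropyHD

lemma itg_mem {f : C(I,I)} {t : ℝ} (ht0 : 0 ≤ t) (ht1 : t ≤ 1) (x v : ℝ) :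
    itg f t x v ∈ Icc (t/4) (1 - t/4) := by
  have h01 : ((f (pr (x + (t/100)*v)) : ℝ)) ∈ Icc (0:ℝ) 1 := (f _).2
  obtain ⟨h0, h1⟩ := h01
  rw [itg]
  constructor
  · nlinarith
  · nlinarith

lemma itg_cont_v (f : C(I,I)) (t x : ℝ) : Continuous fun v => itg f t x v := by
  have := itg_cont.comp (Continuous.prodMk (continuous_const (y := ((f,t),x))) continuous_id)
  exact this

lemma itg_intble (f : C(I,I)) (t x a b : ℝ) : IntervalIntegrable (fun v => itg f t x v) volume a b :=
  (itg_cont_v f t x).intervalIntegrable a b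

lemma A_mem {f : C(I,I)} {t : ℝ} (ht0 : 0 ≤ t) (ht1 : t ≤ 1) (x : ℝ) :
    A f t x ∈ Icc (t/4) (1 - t/4) := by
  constructor
  · have : (t/4) = ∫ _v in (0:ℝ)..1, (t/4) := by simp
    rw [this, A]
    apply intervalIntegral.integral_mono_on zero_le_one (intervalIntegrable_const) (itg_intble f t x 0 1)
    exact fun v _ => (itg_mem ht0 ht1 x v).1
  · have : (1 - t/4) = ∫ _v in (0:ℝ)..1, (1 - t/4) := by simp
    rw [this, A]
    apply intervalIntegral.integral_mono_on zero_le_one (itg_intble f t x 0 1) (intervalIntegrable_const)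
    exact fun v _ => (itg_mem ht0 ht1 x v).2

/-- the window version of the integrand -/
def fr (f : C(I,I)) (t u : ℝ) : ℝ := (1 - t/2) * (f (pr u) : ℝ) + t/4

lemma fr_cont (f : C(I,I)) (t : ℝ) : Continuous (fr f t) := by
  unfold fr
  have : Continuous fun u : ℝ => (f (pr u) : ℝ) :=
    continuous_subtype_val.comp (f.continuous.comp continuous_pr)
  fun_prop

lemma fr_mem {f : C(I,I)} {t : ℝ} (ht0 : 0 ≤ t) (ht1 : t ≤ 1) (u : ℝ) :
    fr f t u ∈ Icc (0:ℝ) 1 := by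
  have h01 : ((f (pr u) : ℝ)) ∈ Icc (0:ℝ) 1 := (f _).2
  obtain ⟨h0, h1⟩ := h01
  rw [fr]
  constructor
  · nlinarith
  · nlinarith

lemma fr_intble (f : C(I,I)) (t a b : ℝ) : IntervalIntegrable (fr f t) volume a b :=
  (fr_cont f t).intervalIntegrable a b

lemma A_window (f : C(I,I)) {t : ℝ} (ht : t ≠ 0) (x : ℝ) :
    A f t x = (t/100)⁻¹ • ∫ u in x..(x + t/100), fr f t u := by
  have h1 : A f t x = ∫ v in (0:ℝ)..1, fr f t ((t/100) * v + x) := by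
    rw [A]
    congr 1
    ext v
    rw [itg, fr]
    ring_nf
  rw [h1, intervalIntegral.integral_comp_mul_add (fr f t) (by positivity) x]
  ring_nf

lemma abs_intervalIntegral_le {f : C(I,I)} {t : ℝ} (ht0 : 0 ≤ t) (ht1 : t ≤ 1) (a b : ℝ) :
    |∫ u in a..b, fr f t u| ≤ |b - a| := by
  have := intervalIntegral.norm_integral_le_of_norm_le_const
    (C := 1) (f := fr f t) (a := a) (b := b) ?_
  · simpa using this
  · intro u _
    have := fr_mem (f := f) ht0 ht1 u
    rw [Real.norm_eq_abs, abs_le]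
    constructor <;> [linarith [this.1]; linarith [this.2]]

lemma A_lip {f : C(I,I)} {t : ℝ} (ht0 : 0 < t) (ht1 : t ≤ 1) (x y : ℝ) :
    |A f t x - A f t y| ≤ (200/t) * |x - y| := by
  have hwx := A_window f ht0.ne' x
  have hwy := A_window f ht0.ne' y
  have key : (∫ u in x..(x + t/100), fr f t u) - (∫ u in y..(y + t/100), fr f t u)
      = (∫ u in x..y, fr f t u) + (∫ u in (y + t/100)..(x + t/100), fr f t u) := by
    have e1 := intervalIntegral.integral_add_adjacent_intervals
      (fr_intble f t x y) (fr_intble f t y (x + t/100))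
    have e2 := intervalIntegral.integral_add_adjacent_intervals
      (fr_intble f t y (y + t/100)) (fr_intble f t (y + t/100) (x + t/100))
    linarith [e1, e2]
  rw [hwx, hwy, smul_eq_mul, smul_eq_mul, ← mul_sub, key, abs_mul]
  have hb : |(∫ u in x..y, fr f t u) + (∫ u in (y + t/100)..(x + t/100), fr f t u)|
      ≤ 2 * |x - y| := by
    calc _ ≤ |∫ u in x..y, fr f t u| + |∫ u in (y + t/100)..(x + t/100), fr f t u| := abs_add_le _ _
    _ ≤ |y - x| + |(x + t/100) - (y + t/100)| :=
        add_le_add (abs_intervalIntegral_le ht0.le ht1 x y) (abs_intervalIntegral_le ht0.le ht1 _ _)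
    _ ≤ 2 * |x - y| := by rw [abs_sub_comm y x]; have : (x + t/100) - (y + t/100) = x - y := by ring
                          rw [this]; linarith
  have hinv : |(t/100)⁻¹| = 100/t := by
    rw [abs_inv, abs_of_pos (by positivity)]
    field_simp
  rw [hinv]
  calc (100/t) * |(∫ u in x..y, fr f t u) + (∫ u in (y + t/100)..(x + t/100), fr f t u)|
      ≤ (100/t) * (2 * |x-y|) := by
        apply mul_le_mul_of_nonneg_left hb (by positivity)
    _ = (200/t) * |x - y| := by ring

end EntropyHD

namespace EntropyHD

/-- wiggle amplitude -/
def S (f : C(I,I)) (t x : ℝ) : ℝ := max 0 (t/100 - |A f t x - x|)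

/-- phase of the wiggle; the period of the wiggle in `x` is `t^2 / (160800*(2*N+2))`. -/
def phase (N : ℕ) (t x : ℝ) : ℝ := 2 * Real.pi * (x * (160800 * (2*(N:ℝ)+2)) / t^2)

/-- the perturbed map -/
def G (N : ℕ) (f : C(I,I)) (t x : ℝ) : ℝ := A f t x + S f t x * Real.sin (phase N t x)

lemma S_nonneg (f : C(I,I)) (t x : ℝ) : 0 ≤ S f t x := le_max_left _ _

lemma S_le (f : C(I,I)) (t x : ℝ) : S f t x ≤ |t|/100 := by
  rw [S]
  apply max_le (by positivity)
  have : t ≤ |t| := le_abs_self t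
  have h2 : 0 ≤ |A f t x - x| := abs_nonneg _
  linarith

lemma S_cont : Continuous (fun z : (C(I,I) × ℝ) × ℝ => S z.1.1 z.1.2 z.2) := by
  unfold S
  have := A_cont
  fun_prop

lemma S_zero (f : C(I,I)) (x : ℝ) : S f 0 x = 0 := by
  rw [S]
  apply max_eq_left
  simp [abs_nonneg]

lemma G_cont (N : ℕ) : Continuous (fun z : (C(I,I) × ℝ) × ℝ => G N z.1.1 z.1.2 z.2) := by
  unfold G
  apply A_cont.add
  rw [continuous_iff_continuousAt]
  intro z₀
  rcases eq_or_ne z₀.1.2 0 with ht | ht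
  · -- squeeze at t = 0
    have hval : S z₀.1.1 z₀.1.2 z₀.2 * Real.sin (phase N z₀.1.2 z₀.2) = 0 := by
      rw [ht, S_zero, zero_mul]
    unfold ContinuousAt
    rw [show (fun z : (C(I,I) × ℝ) × ℝ => S z.1.1 z.1.2 z.2 * Real.sin (phase N z.1.2 z.2)) z₀ = 0 from hval]
    refine squeeze_zero_norm (a := fun z : (C(I,I) × ℝ) × ℝ => |z.1.2|/100) ?_ ?_
    · intro z
      rw [Real.norm_eq_abs, abs_mul]
      calc |S z.1.1 z.1.2 z.2| * |Real.sin (phase N z.1.2 z.2)|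
          ≤ (|z.1.2|/100) * 1 := by
            apply mul_le_mul _ (Real.abs_sin_le_one _) (abs_nonneg _) (by positivity)
            rw [abs_of_nonneg (S_nonneg _ _ _)]
            exact S_le _ _ _
        _ = |z.1.2|/100 := by ring
    · have hcont : Continuous (fun z : (C(I,I) × ℝ) × ℝ => |z.1.2|/100) := by fun_prop
      have := hcont.continuousAt (x := z₀)
      unfold ContinuousAt at this
      simp only [ht] at this
      simpa using this
  · apply ContinuousAt.mul
    · exact S_cont.continuousAt
    · apply (Real.continuous_sin.continuousAt).comp
      unfold phase
      apply ContinuousAt.mul continuousAt_const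
      apply ContinuousAt.div
      · fun_prop
      · fun_prop
      · exact pow_ne_zero 2 ht

lemma G_mem {N : ℕ} {f : C(I,I)} {t : ℝ} (ht0 : 0 ≤ t) (ht1 : t ≤ 1) (x : ℝ) :
    G N f t x ∈ Icc (0:ℝ) 1 := by
  have hA := A_mem (f := f) ht0 ht1 x
  have hS0 := S_nonneg f t x
  have hS1 := S_le f t x
  rw [abs_of_nonneg ht0] at hS1
  have hs := Real.neg_one_le_sin (phase N t x)
  have hs' := Real.sin_le_one (phase N t x)
  have h1 : |S f t x * Real.sin (phase N t x)| ≤ t/100 := by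
    rw [abs_mul]
    calc |S f t x| * |Real.sin (phase N t x)| ≤ (t/100) * 1 := by
          apply mul_le_mul _ (Real.abs_sin_le_one _) (abs_nonneg _) (by positivity)
          rwa [abs_of_nonneg hS0]
      _ = t/100 := by ring
  rw [abs_le] at h1
  rw [G]
  constructor
  · have := hA.1; linarith [h1.1]
  · have := hA.2; linarith [h1.2]

/-- the full homotopy as a continuous map -/
def bigF (N : ℕ) : C((C(I,I) × I) × I, I) :=
  ⟨fun z => ⟨G N z.1.1 z.1.2.1 z.2.1, G_mem z.1.2.2.1 z.1.2.2.2 z.2.1⟩, by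
    apply Continuous.subtype_mk
    have hc : Continuous fun z : (C(I,I) × I) × I => ((z.1.1, (z.1.2 : ℝ)), (z.2 : ℝ)) := by
      fun_prop
    exact (G_cont N).comp hc⟩

/-- the homotopy -/
def bigH (N : ℕ) : C(I,I) × I → C(I,I) := fun q => (bigF N).curry q

lemma bigH_continuous (N : ℕ) : Continuous (bigH N) := ((bigF N).curry).continuous

lemma bigH_apply (N : ℕ) (f : C(I,I)) (t : I) (x : I) :
    (bigH N (f, t) x : ℝ) = G N f t.1 x.1 := rfl

lemma A_zero (f : C(I,I)) (x : I) : A f 0 x.1 = (f x : ℝ) := by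
  rw [A]
  have : ∀ v : ℝ, itg f 0 x.1 v = (f x : ℝ) := by
    intro v
    rw [itg]
    have : pr (x.1 + 0/100*v) = x := by
      apply Subtype.ext
      rw [show x.1 + 0/100*v = x.1 by ring, pr_of_mem x.2]
    rw [this]
    ring
  simp only [this]
  simp

lemma bigH_zero (N : ℕ) (f : C(I,I)) : bigH N (f, 0) = f := by
  ext x
  show G N f ((0:I):ℝ) x.1 = (f x : ℝ)
  rw [show ((0:I):ℝ) = (0:ℝ) from rfl, G, S_zero, zero_mul, add_zero, A_zero]

end EntropyHD

namespace EntropyHD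

lemma phase_eq {N : ℕ} {t : ℝ} (ht : t ≠ 0) (x : ℝ) :
    phase N t x = 2 * Real.pi * (x / (t^2 / (160800 * (2*(N:ℝ)+2)))) := by
  rw [phase]
  congr 1
  rw [div_div_eq_mul_div]

lemma exists_sin_extreme {N : ℕ} {t : ℝ} (ht : t ≠ 0) (lo : ℝ) (sgn : Bool) :
    ∃ x ∈ Icc lo (lo + t^2 / (160800 * (2*(N:ℝ)+2))),
      Real.sin (phase N t x) = (if sgn then 1 else -1) := by
  set c : ℝ := 160800 * (2*(N:ℝ)+2) with hc
  have hcpos : 0 < c := by positivity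
  set p : ℝ := t^2 / c with hpdef
  have hp : 0 < p := by positivity
  set q : ℝ := if sgn then (1:ℝ)/4 else (3:ℝ)/4 with hq
  have hq0 : 0 ≤ q := by rcases sgn <;> norm_num [hq]
  have hq1 : q ≤ 1 := by rcases sgn <;> norm_num [hq]
  set k : ℤ := ⌈lo/p - q⌉ with hk
  refine ⟨p * (q + k), ⟨?_, ?_⟩, ?_⟩
  · have h1 : (lo/p - q : ℝ) ≤ k := Int.le_ceil _
    have : lo/p ≤ q + k := by linarith
    calc lo = p * (lo/p) := by field_simp
      _ ≤ p * (q + k) := by apply mul_le_mul_of_nonneg_left this hp.le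
  · have h2 : (k:ℝ) < lo/p - q + 1 := Int.ceil_lt_add_one _
    have : q + (k:ℝ) ≤ lo/p + 1 := by linarith
    calc p * (q + k) ≤ p * (lo/p + 1) := by apply mul_le_mul_of_nonneg_left this hp.le
      _ = lo + p := by field_simp
  · rw [phase_eq ht]
    have harg : p * (q + k) / (t^2 / c) = q + k := by
      rw [← hpdef]
      field_simp
    rw [harg]
    have hexp : 2 * Real.pi * (q + (k:ℝ)) = 2 * Real.pi * q + (k:ℤ) * (2 * Real.pi) := by
      push_cast; ring
    rw [hexp, Real.sin_add_int_mul_two_pi]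
    rcases sgn with _ | _
    · norm_num [hq]
      rw [show 2 * Real.pi * (3/4) = Real.pi - Real.pi/2 + Real.pi by ring]
      rw [Real.sin_add_pi, Real.sin_pi_sub, Real.sin_pi_div_two]
    · norm_num [hq]
      rw [show 2 * Real.pi * (1/4) = Real.pi/2 by ring, Real.sin_pi_div_two]

end EntropyHD

section Horseshoe
open Dynamics UniformSpace ENNReal
variable {X : Type*} [MetricSpace X]

lemma itinerary (T : X → X) {N : ℕ} (B : Fin N → Set X)
    (hcov : ∀ j j' : Fin N, B j' ⊆ T '' (B j)) (hne : ∀ j, (B j).Nonempty) :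
    ∀ (n : ℕ) (w : ℕ → Fin N), ∃ x : X, ∀ k ≤ n, T^[k] x ∈ B (w k) := by
  intro n
  induction n with
  | zero =>
    intro w
    obtain ⟨x, hx⟩ := hne (w 0)
    exact ⟨x, fun k hk => by simp [Nat.le_zero.1 hk, hx]⟩
  | succ n ih =>
    intro w
    obtain ⟨y, hy⟩ := ih (fun k => w (k+1))
    have hy0 : y ∈ B (w 1) := by simpa using hy 0 (Nat.zero_le n)
    obtain ⟨x, hx, hTx⟩ := hcov (w 0) (w 1) hy0
    refine ⟨x, fun k hk => ?_⟩
    match k with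
    | 0 => simpa using hx
    | (m+1) =>
      rw [Function.iterate_succ_apply, hTx]
      exact hy m (Nat.succ_le_succ_iff.1 hk)

lemma entropy_ge_of_horseshoe (T : X → X) {N : ℕ} (hN : 1 ≤ N)
    (B : Fin N → Set X) {γ : ℝ} (hγ : 0 < γ)
    (hne : ∀ j, (B j).Nonempty)
    (hcov : ∀ j j' : Fin N, B j' ⊆ T '' (B j))
    (hsep : ∀ j j' : Fin N, j ≠ j' → ∀ x ∈ B j, ∀ y ∈ B j', γ ≤ dist x y) :
    (Real.log N : EReal) ≤ coverEntropy T (Set.univ : Set X) := by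
  classical
  set U : Set (X × X) := {p : X × X | dist p.1 p.2 < γ/2} with hU
  have hUuni : U ∈ uniformity X := Metric.dist_mem_uniformity (by linarith)
  -- key: for each n, netMaxcard at time n+1 is at least N^(n+1)
  have key : ∀ n : ℕ, ((N:ℕ∞))^(n+1) ≤ netMaxcard T Set.univ U (n+1) := by
    intro n
    -- choice of itinerary points
    have H : ∀ w : Fin (n+1) → Fin N, ∃ x : X, ∀ k : Fin (n+1), T^[(k:ℕ)] x ∈ B (w k) := by
      intro w
      obtain ⟨x, hx⟩ := itinerary T B hcov hne n (fun k => w ⟨min k n, by omega⟩)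
      refine ⟨x, fun k => ?_⟩
      have := hx k (Nat.lt_succ_iff.1 k.2)
      simpa [min_eq_left (Nat.lt_succ_iff.1 k.2)] using this
    choose xw hxw using H
    -- separation of distinct itineraries at some time
    have sep : ∀ w w' : Fin (n+1) → Fin N, w ≠ w' → ∀ z : X,
        z ∈ ball (xw w) (dynEntourage T U (n+1)) →
        z ∈ ball (xw w') (dynEntourage T U (n+1)) → False := by
      intro w w' hww z hz hz'
      obtain ⟨k, hk⟩ : ∃ k, w k ≠ w' k := by
        by_contra h; push_neg at h; exact hww (funext h)
      simp only [ball, mem_preimage, mem_dynEntourage] at hz hz'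
      have h1 := hz (k:ℕ) k.2
      have h2 := hz' (k:ℕ) k.2
      have hd : dist (T^[(k:ℕ)] (xw w)) (T^[(k:ℕ)] (xw w')) < γ := by
        calc dist (T^[(k:ℕ)] (xw w)) (T^[(k:ℕ)] (xw w'))
            ≤ dist (T^[(k:ℕ)] (xw w)) (T^[(k:ℕ)] z)
              + dist (T^[(k:ℕ)] z) (T^[(k:ℕ)] (xw w')) := dist_triangle _ _ _
          _ < γ/2 + γ/2 := by
              rw [hU] at h1 h2
              have := h1; have := h2
              rw [dist_comm (T^[(k:ℕ)] z)]
              exact add_lt_add h1 h2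
          _ = γ := by ring
      exact absurd hd (not_lt.2 (hsep _ _ hk _ (hxw w k) _ (hxw w' k)))
    have inj : Function.Injective xw := by
      intro w w' h
      by_contra hww
      have hz : xw w ∈ ball (xw w) (dynEntourage T U (n+1)) := by
        simp [ball, mem_dynEntourage, hU]
        intro k hk; simpa using hγ
      exact sep w w' hww (xw w) hz (h ▸ hz)
    set s : Finset X := Finset.univ.image xw with hs
    have hnet : IsDynNetIn T Set.univ U (n+1) (s : Set X) := by
      refine ⟨subset_univ _, ?_⟩
      intro x hx y hy hxy
      simp only [hs, Finset.coe_image, Finset.coe_univ, Set.image_univ, mem_range] at hx hy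
      obtain ⟨w, rfl⟩ := hx
      obtain ⟨w', rfl⟩ := hy
      have hww : w ≠ w' := fun h => hxy (by rw [h])
      rw [Function.onFun]
      rw [Set.disjoint_left]
      intro z hz hz'
      exact sep w w' hww z hz hz'
    have hcard : s.card = N^(n+1) := by
      rw [hs, Finset.card_image_of_injective _ inj]
      simp [Fintype.card_fun]
    calc ((N:ℕ∞))^(n+1) = (s.card : ℕ∞) := by rw [hcard]; push_cast; ring
      _ ≤ netMaxcard T Set.univ U (n+1) := hnet.card_le_netMaxcard
  -- from cardinality to entropy
  have hlogN : ∀ n : ℕ, (Real.log N : EReal)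
      ≤ ENNReal.log (netMaxcard T Set.univ U (n+1)) / ((n+1 : ℕ) : EReal) := by
    intro n
    have h1 : ((N:ℝ≥0∞))^(n+1) ≤ ((netMaxcard T Set.univ U (n+1) : ℕ∞) : ℝ≥0∞) := by
      have := key n
      exact_mod_cast ENat.toENNReal_mono this
    have h2 := ENNReal.log_monotone h1
    rw [ENNReal.log_pow] at h2
    have h3 : ENNReal.log (N : ℝ≥0∞) = (Real.log N : EReal) := by
      rw [ENNReal.log_pos_real (by exact_mod_cast (Nat.pos_of_ne_zero (by omega)).ne') (by simp)]
      simp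
    rw [h3] at h2
    rw [EReal.le_div_iff_mul_le (by exact_mod_cast Nat.succ_pos n)
      (EReal.natCast_ne_top (n+1))]
    rw [mul_comm]
    exact_mod_cast h2
  have hnet : (Real.log N : EReal) ≤ netEntropyEntourage T Set.univ U := by
    apply Filter.le_limsup_of_frequently_le
    · rw [Filter.frequently_atTop]
      intro n
      exact ⟨n+1, Nat.le_succ n, by exact_mod_cast hlogN n⟩
    · exact ⟨⊤, Filter.Eventually.of_forall fun _ => le_top⟩
  exact hnet.trans (netEntropyEntourage_le_coverEntropy T Set.univ hUuni)
end Horseshoe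

namespace EntropyHD

set_option maxHeartbeats 2000000 in
lemma entropy_lower (N : ℕ) (hN : 1 ≤ N) (f : C(I,I)) {t : ℝ} (ht0 : 0 < t) (ht1 : t ≤ 1)
    (T : I → I) (hT : ∀ y : I, (T y : ℝ) = G N f t y.1) :
    (Real.log N : EReal) ≤ Dynamics.coverEntropy T Set.univ := by
  classical
  set c : ℝ := 160800 * (2*(N:ℝ)+2) with hc
  have hcpos : 0 < c := by positivity
  set p : ℝ := t^2 / c with hpdef
  have hp : 0 < p := by positivity
  set R : ℝ := t^2 / 160800 with hR
  have hRp : (2*(N:ℝ)+2) * p = R := by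
    rw [hpdef, hR, hc]; field_simp
  have hRpos : 0 < R := by positivity
  -- continuity of A and G in x
  have hAc : Continuous fun x : ℝ => A f t x := by
    have := A_cont.comp (show Continuous fun x : ℝ => (((f, t), x) : (C(I,I) × ℝ) × ℝ) by fun_prop)
    exact this
  have hgc : Continuous fun x : ℝ => G N f t x := by
    have := (G_cont N).comp
      (show Continuous fun x : ℝ => (((f, t), x) : (C(I,I) × ℝ) × ℝ) by fun_prop)
    exact this
  -- fixed point of A
  obtain ⟨ps, hps01, hpsfix⟩ : ∃ ps ∈ Icc (0:ℝ) 1, A f t ps - ps = 0 := by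
    have hcont : ContinuousOn (fun x : ℝ => A f t x - x) (Icc 0 1) := by fun_prop
    have h0 : 0 < A f t 0 - 0 := by
      have := (A_mem (f := f) ht0.le ht1 0).1; linarith
    have h1 : A f t 1 - 1 < 0 := by
      have := (A_mem (f := f) ht0.le ht1 1).2; linarith
    have := intermediate_value_Icc' (zero_le_one) hcont
    have hmem : (0:ℝ) ∈ Icc ((fun x : ℝ => A f t x - x) 1) ((fun x : ℝ => A f t x - x) 0) :=
      ⟨h1.le, h0.le⟩
    obtain ⟨ps, hps, hfix⟩ := this hmem
    exact ⟨ps, hps, hfix⟩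
  have hpsfix' : A f t ps = ps := by linarith
  have hpslo : t/4 ≤ ps := by have := (A_mem (f := f) ht0.le ht1 ps).1; linarith
  have hpshi : ps ≤ 1 - t/4 := by have := (A_mem (f := f) ht0.le ht1 ps).2; linarith
  -- smallness of the displacement near the fixed point
  have φsmall : ∀ x : ℝ, |x - ps| ≤ R → |A f t x - x| ≤ (t/100)/8 := by
    intro x hx
    have h1 : |A f t x - x| ≤ |A f t x - A f t ps| + |ps - x| := by
      have : A f t x - x = (A f t x - A f t ps) + (ps - x) := by rw [hpsfix']; ring
      rw [this]; exact abs_add_le _ _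
    have h2 := A_lip (f := f) ht0 ht1 x ps
    have h3 : |ps - x| = |x - ps| := abs_sub_comm _ _
    have h4 : (200/t) * |x - ps| ≤ (200/t) * R := by
      apply mul_le_mul_of_nonneg_left hx (by positivity)
    have h5 : (200/t) * R = 200 * t / 160800 := by rw [hR]; field_simp
    have h6 : |x - ps| ≤ R := hx
    have h7 : R ≤ t/160800 := by rw [hR]; nlinarith
    calc |A f t x - x| ≤ (200/t) * R + R := by linarith
      _ ≤ 200 * t/160800 + t/160800 := by linarith [h5.le]
      _ = (t/100)/8 := by ring
  -- the blocks
  set lo : Fin N → ℝ := fun j => ps + (2*(j:ℝ)+1)*p with hlo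
  set hi : Fin N → ℝ := fun j => lo j + p with hhi
  have hjBound : ∀ j : Fin N, (j:ℝ) ≤ (N:ℝ) - 1 := by
    intro j
    have : (j:ℕ) < N := j.2
    have : ((j:ℕ):ℝ) ≤ (N:ℝ) - 1 := by
      have h := Nat.le_sub_one_of_lt this
      calc ((j:ℕ):ℝ) ≤ ((N-1:ℕ):ℝ) := by exact_mod_cast h
        _ = (N:ℝ) - 1 := by
            have : (1:ℕ) ≤ N := hN
            push_cast [Nat.cast_sub this]
            ring
    exact this
  have hloeq : ∀ j : Fin N, lo j = ps + (2*(j:ℝ)+1)*p := fun j => rfl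
  have hhieq : ∀ j : Fin N, hi j = lo j + p := fun j => rfl
  have hhiR : ∀ j : Fin N, hi j ≤ ps + R := by
    intro j
    have h1 := hjBound j
    rw [hhieq, hloeq, ← hRp]
    nlinarith
  have hloR : ∀ j : Fin N, ps ≤ lo j := by
    intro j
    rw [hloeq]
    have : (0:ℝ) ≤ (j:ℝ) := by positivity
    nlinarith
  have hxR : ∀ (j : Fin N) (x : ℝ), x ∈ Icc (lo j) (hi j) → |x - ps| ≤ R := by
    intro j x hx
    rw [abs_le]
    constructor
    · have := hloR j; linarith [hx.1, hRpos]
    · have := hhiR j; linarith [hx.2]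
  have hsub01 : ∀ (j : Fin N) (x : ℝ), x ∈ Icc (lo j) (hi j) → x ∈ Icc (0:ℝ) 1 := by
    intro j x hx
    have h1 := hloR j
    have h2 := hhiR j
    have hR4 : R ≤ t/4 := by rw [hR]; nlinarith
    constructor
    · linarith [hx.1]
    · linarith [hx.2]
  set B : Fin N → Set I := fun j => {y : I | (y:ℝ) ∈ Icc (lo j) (hi j)} with hB
  have hne : ∀ j, (B j).Nonempty := by
    intro j
    have hmem : lo j ∈ Icc (lo j) (hi j) := ⟨le_refl _, by rw [hhieq]; linarith⟩
    exact ⟨⟨lo j, hsub01 j _ hmem⟩, hmem⟩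
  have hsep : ∀ j j' : Fin N, j ≠ j' → ∀ x ∈ B j, ∀ y ∈ B j', p ≤ dist x y := by
    have key : ∀ j j' : Fin N, j < j' → ∀ x ∈ B j, ∀ y ∈ B j', p ≤ (y:ℝ) - (x:ℝ) := by
      intro j j' hjj x hx y hy
      have hcast : (j:ℝ) + 1 ≤ (j':ℝ) := by
        have : (j:ℕ) < (j':ℕ) := hjj
        exact_mod_cast this
      have h1 : (x:ℝ) ≤ hi j := hx.2
      have h2 : lo j' ≤ (y:ℝ) := hy.1
      rw [hhieq, hloeq] at h1
      rw [hloeq] at h2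
      nlinarith
    intro j j' hjj x hx y hy
    rw [Subtype.dist_eq, Real.dist_eq]
    rcases hjj.lt_or_gt with h | h
    · have := key j j' h x hx y hy
      rw [abs_sub_comm]
      rw [abs_of_nonneg (by linarith)]
      linarith
    · have := key j' j h y hy x hx
      rw [abs_of_nonneg (by linarith)]
      linarith
  have hcov : ∀ j j' : Fin N, B j' ⊆ T '' (B j) := by
    intro j j' y hy
    obtain ⟨xp, hxpmem, hxpsin⟩ := exists_sin_extreme (N := N) ht0.ne' (lo j) true
    obtain ⟨xm, hxmmem, hxmsin⟩ := exists_sin_extreme (N := N) ht0.ne' (lo j) false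
    norm_num at hxpsin hxmsin
    have hxpIcc : xp ∈ Icc (lo j) (hi j) := by rwa [hhi]
    have hxmIcc : xm ∈ Icc (lo j) (hi j) := by rwa [hhi]
    have hep := φsmall xp (hxR j xp hxpIcc)
    have hem := φsmall xm (hxR j xm hxmIcc)
    have hSp : S f t xp = t/100 - |A f t xp - xp| := by
      rw [S]; apply max_eq_right; linarith
    have hSm : S f t xm = t/100 - |A f t xm - xm| := by
      rw [S]; apply max_eq_right; linarith
    have hgp : G N f t xp ≥ ps + R := by
      rw [G, hxpsin, hSp, mul_one]
      have habs : A f t xp - xp ≥ -((t/100)/8) := by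
        have := abs_le.1 hep; linarith [this.1]
      have habs2 : |A f t xp - xp| ≤ (t/100)/8 := hep
      have hxplo : lo j ≤ xp := hxpIcc.1
      have hpslo' : ps ≤ lo j := hloR j
      have hRt : R ≤ (3/4)*(t/100) := by rw [hR]; nlinarith
      nlinarith [hxpIcc.1]
    have hgm : G N f t xm ≤ ps := by
      rw [G, hxmsin, hSm]
      have habs2 : |A f t xm - xm| ≤ (t/100)/8 := hem
      have habs : A f t xm - xm ≤ (t/100)/8 := by
        have := abs_le.1 hem; linarith [this.2]
      have hxmhi : xm ≤ hi j := hxmIcc.2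
      have hhiR' := hhiR j
      have hRt : R ≤ (3/4)*(t/100) := by rw [hR]; nlinarith
      nlinarith
    -- y is between g xm and g xp
    have hy1 : (y:ℝ) ∈ Icc (lo j') (hi j') := hy
    have hymem : (y:ℝ) ∈ Icc (G N f t xm) (G N f t xp) := by
      constructor
      · have := hloR j'; linarith [hy1.1]
      · have := hhiR j'; linarith [hy1.2]
    have hsubuIcc : (y:ℝ) ∈ Set.uIcc (G N f t xm) (G N f t xp) :=
      Set.Icc_subset_uIcc hymem
    have := intermediate_value_uIcc (a := xm) (b := xp) (f := fun x => G N f t x)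
      hgc.continuousOn
    obtain ⟨x, hxu, hgx⟩ := this hsubuIcc
    have hxIcc : x ∈ Icc (lo j) (hi j) := by
      have : Set.uIcc xm xp ⊆ Icc (lo j) (hi j) :=
        (Set.ordConnected_Icc).uIcc_subset hxmIcc hxpIcc
      exact this hxu
    refine ⟨⟨x, hsub01 j x hxIcc⟩, hxIcc, ?_⟩
    apply Subtype.ext
    rw [hT]
    exact hgx
  exact entropy_ge_of_horseshoe T hN B hp hne hcov hsep

end EntropyHD


/-- For every real `a ≥ 0`, both `E_{≥ a}` and `E_{> a}` are homotopy dense in `C(I)`. -/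
theorem E_ge_and_E_gt_homotopyDense (a : ℝ) (ha : 0 ≤ a) :
    HomotopyDense {f : C(I, I) | (a : EReal) ≤ htop f} ∧
    HomotopyDense {f : C(I, I) | (a : EReal) < htop f} := by
  set N : ℕ := ⌈Real.exp a⌉₊ + 1 with hNdef
  have hN1 : 1 ≤ N := by omega
  have hNgt : Real.exp a < (N : ℝ) := by
    calc Real.exp a ≤ (⌈Real.exp a⌉₊ : ℝ) := Nat.le_ceil _
      _ < (N : ℝ) := by rw [hNdef]; exact_mod_cast Nat.lt_succ_self _
  have hlog : a < Real.log N := by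
    rw [Real.lt_log_iff_exp_lt (by exact_mod_cast Nat.pos_of_ne_zero (by omega))]
    exact hNgt
  have key : ∀ (f : C(I,I)) (t : I), 0 < t → (a : EReal) < htop (EntropyHD.bigH N (f, t)) := by
    intro f t ht
    have ht' : (0:ℝ) < (t:ℝ) := ht
    have hle := EntropyHD.entropy_lower N hN1 f ht' t.2.2
      (⇑(EntropyHD.bigH N (f,t))) (fun y => rfl)
    calc (a:EReal) < (Real.log N : EReal) := EReal.coe_lt_coe_iff.2 hlog
      _ ≤ htop (EntropyHD.bigH N (f, t)) := hle
  constructor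
  · exact ⟨EntropyHD.bigH N, EntropyHD.bigH_continuous N,
      fun f => EntropyHD.bigH_zero N f, fun f t ht => (key f t ht).le⟩
  · exact ⟨EntropyHD.bigH N, EntropyHD.bigH_continuous N,
      fun f => EntropyHD.bigH_zero N f, fun f t ht => key f t ht⟩
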